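/- arXiv:1202.0046 — 3 statements merged into one kernel-verified Lean document; each statement's English description precedes it below -/
import Mathlib

section
/- There exists a closed convex set B ⊆ ℝ² containing the origin such that the function t ↦ log γ₂(eᵗ B) is not concave on ℝ. That is, the (B) conjecture fails without the symmetry assumption. -/
open MeasureTheory Real Set Pointwise

noncomputable def gaussian2 : Measure (ℝ × ℝ) :=
  volume.withDensity fun p => ENNReal.ofReal ((1 / (2 * π)) * Real.exp (-(p.1 ^ 2 + p.2 ^ 2) / 2))

lemma dens_pos (p : ℝ × ℝ) : 0 < (1 / (2 * π)) * Real.exp (-(p.1 ^ 2 + p.2 ^ 2) / 2) := by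
  positivity

lemma gaussian2_apply {S : Set (ℝ × ℝ)} (hS : MeasurableSet S) :
    gaussian2 S = ∫⁻ p in S, ENNReal.ofReal ((1 / (2 * π)) * Real.exp (-(p.1 ^ 2 + p.2 ^ 2) / 2)) := by
  exact withDensity_apply _ hS

lemma integrable_dens :
    Integrable (fun p : ℝ × ℝ => (1 / (2 * π)) * Real.exp (-(p.1 ^ 2 + p.2 ^ 2) / 2)) := by
  have h1 : Integrable (fun x : ℝ => (1 / (2 * π)) * Real.exp (-(1/2 : ℝ) * x ^ 2)) :=
    (integrable_exp_neg_mul_sq (by norm_num : (0:ℝ) < 1/2)).const_mul _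
  have h2 : Integrable (fun x : ℝ => Real.exp (-(1/2 : ℝ) * x ^ 2)) :=
    integrable_exp_neg_mul_sq (by norm_num)
  have := (h1.mul_prod h2 : Integrable (fun p : ℝ × ℝ =>
    ((1 / (2 * π)) * Real.exp (-(1/2 : ℝ) * p.1 ^ 2)) * Real.exp (-(1/2 : ℝ) * p.2 ^ 2))
    (volume.prod volume))
  rw [← Measure.volume_eq_prod] at this
  convert this using 2 with p
  · rfl
  rw [mul_assoc, ← Real.exp_add]
  ring_nf

lemma gaussian2_fin (S : Set (ℝ × ℝ)) : gaussian2 S < ⊤ := by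
  refine lt_of_le_of_lt (measure_mono (subset_univ S)) ?_
  rw [gaussian2_apply MeasurableSet.univ, Measure.restrict_univ]
  exact integrable_dens.lintegral_lt_top

lemma gaussian2_pos {S : Set (ℝ × ℝ)} (hS : MeasurableSet S) (hv : volume S ≠ 0) :
    0 < gaussian2 S := by
  rw [gaussian2_apply hS]
  rw [pos_iff_ne_zero]
  intro h
  rw [lintegral_eq_zero_iff] at h
  · have : volume S = 0 := by
      have := h
      rw [Filter.EventuallyEq, ae_iff] at this
      simp only [Pi.zero_apply] at this
      have heq : {p : ℝ × ℝ | ¬ ENNReal.ofReal ((1 / (2 * π)) * Real.exp (-(p.1 ^ 2 + p.2 ^ 2) / 2)) = 0} = univ := by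
        ext p; simp only [mem_setOf_eq, mem_univ, iff_true, ENNReal.ofReal_eq_zero, not_le]
        exact dens_pos p
      rw [heq] at this
      simpa [Measure.restrict_apply MeasurableSet.univ] using this
    exact hv this
  · measurability

lemma meas_half (a : ℝ) : MeasurableSet {p : ℝ × ℝ | a ≤ p.1} :=
  measurableSet_le measurable_const measurable_fst

lemma half_eq (a : ℝ) : {p : ℝ × ℝ | a ≤ p.1} = (Ici a) ×ˢ (univ : Set ℝ) := by
  ext p; simp [Set.mem_prod]

lemma strip_eq : {p : ℝ × ℝ | -Real.exp 1 ≤ p.1 ∧ p.1 < -1} = (Ico (-Real.exp 1) (-1)) ×ˢ (univ : Set ℝ) := by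
  ext p; simp [Set.mem_prod, and_comm]

lemma vol_half_ne (a : ℝ) : volume {p : ℝ × ℝ | a ≤ p.1} ≠ 0 := by
  rw [half_eq, Measure.volume_eq_prod, Measure.prod_prod]
  simp [Real.volume_Ici]

lemma vol_strip_ne : volume {p : ℝ × ℝ | -Real.exp 1 ≤ p.1 ∧ p.1 < -1} ≠ 0 := by
  rw [strip_eq, Measure.volume_eq_prod, Measure.prod_prod, Real.volume_Ico]
  have h1 : (1:ℝ) < Real.exp 1 := by
    have := Real.add_one_le_exp (1:ℝ); linarith
  rw [mul_ne_zero_iff]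
  constructor
  · simp only [ne_eq, ENNReal.ofReal_eq_zero, not_le]; linarith
  · simp

lemma smul_half (t : ℝ) :
    Real.exp t • {p : ℝ × ℝ | -1 ≤ p.1} = {p : ℝ × ℝ | -Real.exp t ≤ p.1} := by
  have het : (0:ℝ) < Real.exp t := Real.exp_pos t
  ext p
  constructor
  · rintro ⟨b, hb, rfl⟩
    simp only [mem_setOf_eq] at hb ⊢
    have : Real.exp t * (-1) ≤ Real.exp t * b.1 := by
      exact mul_le_mul_of_nonneg_left hb het.le
    simpa [Prod.smul_fst, smul_eq_mul] using this
  · intro hp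
    refine ⟨(Real.exp t)⁻¹ • p, ?_, smul_inv_smul₀ het.ne' p⟩
    simp only [mem_setOf_eq, Prod.smul_fst, smul_eq_mul]
    rw [neg_le, ← mul_neg]
    calc (Real.exp t)⁻¹ * -p.1 ≤ (Real.exp t)⁻¹ * Real.exp t := by
          apply mul_le_mul_of_nonneg_left _ (inv_nonneg.2 het.le)
          simp only [mem_setOf_eq] at hp; linarith
      _ = 1 := inv_mul_cancel₀ het.ne'

lemma meas_strip : MeasurableSet {p : ℝ × ℝ | -Real.exp 1 ≤ p.1 ∧ p.1 < -1} :=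
  (measurableSet_le measurable_const measurable_fst).inter
    (measurableSet_lt measurable_fst measurable_const)

lemma union_half :
    {p : ℝ × ℝ | -Real.exp 1 ≤ p.1} =
      {p : ℝ × ℝ | -Real.exp 0 ≤ p.1} ∪ {p : ℝ × ℝ | -Real.exp 1 ≤ p.1 ∧ p.1 < -1} := by
  have h1 : (1:ℝ) ≤ Real.exp 1 := by have := Real.add_one_le_exp (1:ℝ); linarith
  ext p
  simp only [Real.exp_zero, mem_union, mem_setOf_eq]
  constructor
  · intro h
    rcases lt_or_ge p.1 (-1) with h' | h'
    · exact Or.inr ⟨h, h'⟩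
    · exact Or.inl h'
  · rintro (h | ⟨h, _⟩)
    · linarith
    · exact h

lemma strict_mono_01 :
    gaussian2 {p : ℝ × ℝ | -Real.exp 0 ≤ p.1} < gaussian2 {p : ℝ × ℝ | -Real.exp 1 ≤ p.1} := by
  have hdisj : Disjoint {p : ℝ × ℝ | -Real.exp 0 ≤ p.1}
      {p : ℝ × ℝ | -Real.exp 1 ≤ p.1 ∧ p.1 < -1} := by
    rw [Set.disjoint_left]
    rintro p hp ⟨_, h2⟩
    simp only [Real.exp_zero, mem_setOf_eq] at hp
    linarith
  have hu : gaussian2 {p : ℝ × ℝ | -Real.exp 1 ≤ p.1} =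
      gaussian2 {p : ℝ × ℝ | -Real.exp 0 ≤ p.1} +
        gaussian2 {p : ℝ × ℝ | -Real.exp 1 ≤ p.1 ∧ p.1 < -1} := by
    rw [union_half]
    exact measure_union hdisj meas_strip
  rw [hu]
  exact ENNReal.lt_add_right (gaussian2_fin _).ne
    (gaussian2_pos meas_strip vol_strip_ne).ne'

theorem stmt_12 :
    ∃ B : Set (ℝ × ℝ), IsClosed B ∧ Convex ℝ B ∧ (0 : ℝ × ℝ) ∈ B ∧
      ¬ ConcaveOn ℝ Set.univ (fun t : ℝ => Real.log (gaussian2 (Real.exp t • B)).toReal) := by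
  refine ⟨{p : ℝ × ℝ | -1 ≤ p.1}, ?_, ?_, ?_, ?_⟩
  · exact isClosed_le continuous_const continuous_fst
  · intro x hx y hy a b ha hb hab
    simp only [mem_setOf_eq] at *
    have h1 : a * (-1) ≤ a * x.1 := mul_le_mul_of_nonneg_left hx ha
    have h2 : b * (-1) ≤ b * y.1 := mul_le_mul_of_nonneg_left hy hb
    have h3 : (a • x + b • y).1 = a * x.1 + b * y.1 := rfl
    rw [h3]; linarith
  · simp only [mem_setOf_eq]; norm_num
  · intro h
    simp only [smul_half] at h
    set F : ℝ → ℝ := fun t => Real.log (gaussian2 {p : ℝ × ℝ | -Real.exp t ≤ p.1}).toReal with hF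
    -- positivity and finiteness facts
    have hfin : ∀ t : ℝ, gaussian2 {p : ℝ × ℝ | -Real.exp t ≤ p.1} ≠ ⊤ :=
      fun t => (gaussian2_fin _).ne
    have hposm : ∀ t : ℝ, 0 < (gaussian2 {p : ℝ × ℝ | -Real.exp t ≤ p.1}).toReal :=
      fun t => ENNReal.toReal_pos (gaussian2_pos (meas_half _) (vol_half_ne _)).ne' (hfin t)
    have hpos0 : 0 < (gaussian2 {p : ℝ × ℝ | (0:ℝ) ≤ p.1}).toReal :=
      ENNReal.toReal_pos (gaussian2_pos (meas_half _) (vol_half_ne _)).ne' (gaussian2_fin _).ne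
    set L : ℝ := Real.log (gaussian2 {p : ℝ × ℝ | (0:ℝ) ≤ p.1}).toReal with hLdef
    have hL : ∀ t : ℝ, L ≤ F t := by
      intro t
      have hsub : {p : ℝ × ℝ | (0:ℝ) ≤ p.1} ⊆ {p : ℝ × ℝ | -Real.exp t ≤ p.1} := by
        intro p hp
        simp only [mem_setOf_eq] at *
        have := Real.exp_pos t
        linarith
      exact Real.log_le_log hpos0 (ENNReal.toReal_mono (hfin t) (measure_mono hsub))
    have hd : F 0 < F 1 := by
      apply Real.log_lt_log (hposm 0)
      exact (ENNReal.toReal_lt_toReal (hfin 0) (hfin 1)).2 strict_mono_01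
    set d : ℝ := F 1 - F 0 with hddef
    have hd0 : 0 < d := by simp only [hddef]; linarith
    set T : ℝ := (F 0 - L) / d + 1 with hTdef
    have hT1 : (1:ℝ) ≤ T := by
      have h0 : 0 ≤ (F 0 - L) / d := div_nonneg (by linarith [hL 0]) hd0.le
      rw [hTdef]; linarith
    have hTpos : (0:ℝ) < T + 1 := by linarith
    have ha : (0:ℝ) ≤ 1 / (T + 1) := by positivity
    have hb : (0:ℝ) ≤ T / (T + 1) := by
      apply div_nonneg <;> linarith
    have hab : 1 / (T + 1) + T / (T + 1) = 1 := by
      rw [← add_div, add_comm, div_self hTpos.ne']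
    have key := h.2 (mem_univ (-T)) (mem_univ (1:ℝ)) ha hb hab
    have hpt : (1 / (T + 1)) • (-T) + (T / (T + 1)) • (1:ℝ) = 0 := by
      simp only [smul_eq_mul]
      field_simp
      ring
    rw [hpt] at key
    simp only [smul_eq_mul] at key
    -- key : 1/(T+1) * F (-T) + T/(T+1) * F 1 ≤ F 0
    have key2 : F (-T) + T * F 1 ≤ (T + 1) * F 0 := by
      have h' := mul_le_mul_of_nonneg_left key hTpos.le
      calc F (-T) + T * F 1 = (T + 1) * (1 / (T + 1) * F (-T) + T / (T + 1) * F 1) := by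
            field_simp
            try ring
        _ ≤ (T + 1) * F 0 := h'
    have hring : T * F 1 - T * F 0 = T * d := by rw [hddef]; ring
    have hTd : T * d = (F 0 - L) + d := by
      rw [hTdef]; field_simp
    linarith [hL (-T), key2, hring, hTd, hd0]
end

section
/- Let H_ε = {(x,y) ∈ ℝ² : y ≥ −ε} be a halfspace with ε > 0. Then for sufficiently small ε > 0, the function t ↦ log γ₂(eᵗ H_ε) is not concave on ℝ. Hence the (B) property fails for halfspaces containing but not symmetric about the origin. -/
open MeasureTheory Real Set Pointwise

namespace Aux13

noncomputable def dens (p : ℝ × ℝ) : ℝ :=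
  (1 / (2 * π)) * Real.exp (-(p.1 ^ 2 + p.2 ^ 2) / 2)

lemma dens_pos (p : ℝ × ℝ) : 0 < dens p := by
  unfold dens
  positivity

lemma dens_measurable : Measurable dens := by
  unfold dens; fun_prop

lemma gaussian2_apply {s : Set (ℝ × ℝ)} (hs : MeasurableSet s) :
    gaussian2 s = ∫⁻ p in s, ENNReal.ofReal (dens p) := by
  rw [gaussian2, withDensity_apply _ hs]; rfl

lemma dens_integrable : Integrable dens := by
  have h1 : Integrable (fun x : ℝ => Real.exp (-(1/2) * x ^ 2)) :=
    integrable_exp_neg_mul_sq (by norm_num)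
  have h2 : Integrable (fun p : ℝ × ℝ =>
      Real.exp (-(1/2) * p.1 ^ 2) * Real.exp (-(1/2) * p.2 ^ 2)) := by
    rw [Measure.volume_eq_prod]
    exact h1.mul_prod h1
  have h3 := h2.const_mul (1 / (2 * π))
  convert h3 using 2 with p
  unfold dens
  rw [← Real.exp_add]
  ring_nf

instance : IsFiniteMeasure gaussian2 := by
  constructor
  rw [gaussian2_apply MeasurableSet.univ, Measure.restrict_univ]
  exact dens_integrable.lintegral_lt_top

lemma gaussian2_pos {s : Set (ℝ × ℝ)} (hs : MeasurableSet s) (hv : 0 < volume s) :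
    0 < gaussian2 s := by
  rw [gaussian2_apply hs, ← lintegral_indicator hs _,
    lintegral_pos_iff_support ((dens_measurable.ennreal_ofReal).indicator hs)]
  have : Function.support (s.indicator fun p => ENNReal.ofReal (dens p)) = s := by
    rw [Set.support_indicator]
    refine Set.inter_eq_self_of_subset_left fun p _ => ?_
    exact (ENNReal.ofReal_pos.2 (dens_pos p)).ne'
  rwa [this]

def A (c : ℝ) : Set (ℝ × ℝ) := {p | p.2 ≥ -c}

lemma measA (c : ℝ) : MeasurableSet (A c) :=
  measurableSet_le measurable_const measurable_snd

lemma A_mono {c c' : ℝ} (h : c ≤ c') : A c ⊆ A c' := by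
  intro p hp
  simp only [A, Set.mem_setOf_eq, ge_iff_le] at hp ⊢
  linarith

lemma smul_half (c ε : ℝ) (hc : 0 < c) :
    c • {p : ℝ × ℝ | p.2 ≥ -ε} = A (ε * c) := by
  ext p
  rw [Set.mem_smul_set_iff_inv_smul_mem₀ hc.ne']
  simp only [Set.mem_setOf_eq, Prod.smul_snd, smul_eq_mul, A, ge_iff_le]
  rw [inv_mul_eq_div, le_div_iff₀ hc]
  constructor <;> intro h <;> nlinarith

lemma gaussian2_A_pos {c : ℝ} (hc : 0 ≤ c) : 0 < gaussian2 (A c) := by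
  refine gaussian2_pos (measA c) ?_
  have hsub : (Set.Ioo (0:ℝ) 1) ×ˢ (Set.Ioo (0:ℝ) 1) ⊆ A c := by
    rintro ⟨x, y⟩ ⟨_, hy⟩
    simp only [A, Set.mem_setOf_eq]
    have : (0:ℝ) < y := hy.1
    linarith
  refine lt_of_lt_of_le ?_ (measure_mono hsub)
  rw [Measure.volume_eq_prod, Measure.prod_prod, Real.volume_Ioo]
  norm_num

lemma gaussian2_strict {c c' : ℝ} (h : c < c') :
    gaussian2 (A c) < gaussian2 (A c') := by
  have hsub := A_mono h.le
  have hdpos : 0 < gaussian2 (A c' \ A c) := by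
    refine gaussian2_pos ((measA c').diff (measA c)) ?_
    have hsub2 : (Set.Ioo (0:ℝ) 1) ×ˢ (Set.Ioo (-c') (-c)) ⊆ A c' \ A c := by
      rintro ⟨x, y⟩ ⟨_, hy⟩
      constructor
      · exact hy.1.le
      · simp only [A, Set.mem_setOf_eq, ge_iff_le, not_le]
        exact hy.2
    refine lt_of_lt_of_le ?_ (measure_mono hsub2)
    rw [Measure.volume_eq_prod, Measure.prod_prod, Real.volume_Ioo, Real.volume_Ioo]
    rw [ENNReal.mul_pos_iff]
    constructor <;> · rw [ENNReal.ofReal_pos]; linarith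
  have heq : gaussian2 (A c') = gaussian2 (A c) + gaussian2 (A c' \ A c) := by
    conv_lhs => rw [← Set.union_diff_cancel hsub]
    exact measure_union Set.disjoint_sdiff_right ((measA c').diff (measA c))
  rw [heq]
  exact ENNReal.lt_add_right (measure_ne_top _ _) hdpos.ne'

lemma not_concave_of_bdd {f : ℝ → ℝ} {B : ℝ} (hB : ∀ t, B ≤ f t) (h01 : f 0 < f 1) :
    ¬ ConcaveOn ℝ Set.univ f := by
  intro h
  set d := f 1 - f 0 with hd
  have hdpos : 0 < d := sub_pos.2 h01
  set n : ℝ := max 1 ((f 0 - B) / d + 1) with hn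
  have hn1 : (1:ℝ) ≤ n := le_max_left _ _
  have hnpos : (0:ℝ) < n := lt_of_lt_of_le one_pos hn1
  have hkey : f 0 - B < n * d := by
    have h2 : (f 0 - B) / d + 1 ≤ n := le_max_right _ _
    have h3 : (f 0 - B) / d < n := lt_of_lt_of_le (lt_add_one _) h2
    exact (div_lt_iff₀ hdpos).1 h3
  have hn1pos : (0:ℝ) < n + 1 := by linarith
  have ha : (0:ℝ) ≤ 1 / (n+1) := by positivity
  have hb : (0:ℝ) ≤ n / (n+1) := by positivity
  have hab : 1/(n+1) + n/(n+1) = 1 := by field_simp; ring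
  have hx := h.2 (Set.mem_univ (-n)) (Set.mem_univ 1) ha hb hab
  have hpt : (1/(n+1)) • (-n) + (n/(n+1)) • (1:ℝ) = 0 := by
    rw [smul_eq_mul, smul_eq_mul]; field_simp; ring
  rw [hpt, smul_eq_mul, smul_eq_mul] at hx
  have hBn := hB (-n)
  have h4 : (1/(n+1)) * B + (n/(n+1)) * f 1 ≤ f 0 := by
    nlinarith [mul_le_mul_of_nonneg_left hBn ha]
  have h5 : B + n * f 1 ≤ (n+1) * f 0 := by
    have := mul_le_mul_of_nonneg_left h4 hn1pos.le
    field_simp at this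
    linarith
  nlinarith

end Aux13

theorem stmt_13 :
    ∃ ε₀ > (0 : ℝ), ∀ ε ∈ Set.Ioo (0 : ℝ) ε₀,
      ¬ ConcaveOn ℝ Set.univ (fun t : ℝ =>
        Real.log (gaussian2 (Real.exp t • {p : ℝ × ℝ | p.2 ≥ -ε})).toReal) := by
  refine ⟨1, one_pos, fun ε hε => ?_⟩
  obtain ⟨hε0, _⟩ := hε
  set f : ℝ → ℝ := fun t : ℝ =>
    Real.log (gaussian2 (Real.exp t • {p : ℝ × ℝ | p.2 ≥ -ε})).toReal with hf
  have hset : ∀ t : ℝ, Real.exp t • {p : ℝ × ℝ | p.2 ≥ -ε} = Aux13.A (ε * Real.exp t) :=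
    fun t => Aux13.smul_half _ _ (Real.exp_pos t)
  have hε_exp : ∀ t : ℝ, (0:ℝ) ≤ ε * Real.exp t := fun t => (mul_pos hε0 (Real.exp_pos t)).le
  have hm0 : 0 < gaussian2 (Aux13.A 0) := Aux13.gaussian2_A_pos le_rfl
  have hmt : ∀ t : ℝ, 0 < (gaussian2 (Aux13.A (ε * Real.exp t))).toReal := fun t =>
    ENNReal.toReal_pos (Aux13.gaussian2_A_pos (hε_exp t)).ne' (measure_ne_top _ _)
  -- lower bound
  have hB : ∀ t : ℝ, Real.log (gaussian2 (Aux13.A 0)).toReal ≤ f t := by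
    intro t
    rw [hf]
    simp only [hset t]
    refine Real.log_le_log (ENNReal.toReal_pos hm0.ne' (measure_ne_top _ _)) ?_
    exact ENNReal.toReal_le_toReal (measure_ne_top _ _) (measure_ne_top _ _) |>.2
      (measure_mono (Aux13.A_mono (hε_exp t)))
  have h01 : f 0 < f 1 := by
    rw [hf]
    simp only [hset 0, hset 1]
    refine Real.log_lt_log (hmt 0) ?_
    refine (ENNReal.toReal_lt_toReal (measure_ne_top _ _) (measure_ne_top _ _)).2 ?_
    refine Aux13.gaussian2_strict ?_
    have h1 : (1:ℝ) < Real.exp 1 := by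
      have := Real.add_one_lt_exp (x := 1) one_ne_zero
      linarith
    rw [Real.exp_zero]
    nlinarith
  exact Aux13.not_concave_of_bdd hB h01
end

section
/- Let ε > 0. The one-dimensional function φ(t) = log γ₁([−εeᵗ, ∞)) = log(1 − T(εeᵗ)) is not concave on ℝ for sufficiently small ε, where γ₁ is the standard Gaussian measure on ℝ and T its tail function. -/
open MeasureTheory Real Set ProbabilityTheory

lemma aux_meas_pos (x : ℝ) : 0 < ((gaussianReal 0 1 (Set.Ici x)).toReal) := by
  have hne : gaussianReal 0 1 (Set.Ici x) ≠ 0 := by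
    intro h
    have := (gaussianReal_absolutelyContinuous' 0 (by norm_num : (1 : NNReal) ≠ 0)) h
    simp [Real.volume_Ici] at this
  have hfin : gaussianReal 0 1 (Set.Ici x) ≠ ⊤ := measure_ne_top _ _
  exact ENNReal.toReal_pos hne hfin

lemma aux_mono {x y : ℝ} (h : x ≤ y) :
    ((gaussianReal 0 1 (Set.Ici y)).toReal) ≤ ((gaussianReal 0 1 (Set.Ici x)).toReal) :=
  ENNReal.toReal_mono (measure_ne_top _ _) (measure_mono (Set.Ici_subset_Ici.mpr h))

lemma aux_strict {x y : ℝ} (h : x < y) :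
    ((gaussianReal 0 1 (Set.Ici y)).toReal) < ((gaussianReal 0 1 (Set.Ici x)).toReal) := by
  have hIoo : (0 : ENNReal) < gaussianReal 0 1 (Set.Ioo x y) := by
    rw [pos_iff_ne_zero]
    intro h0
    have := (gaussianReal_absolutelyContinuous' 0 (by norm_num : (1 : NNReal) ≠ 0)) h0
    rw [Real.volume_Ioo] at this
    simp [ENNReal.ofReal_eq_zero, sub_pos.mpr h, not_le.mpr (sub_pos.mpr h)] at this
  have hsub : Set.Ioo x y ∪ Set.Ici y ⊆ Set.Ici x := by
    rintro z (hz | hz)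
    · exact le_of_lt hz.1
    · exact le_trans (le_of_lt h) hz
  have hdisj : Disjoint (Set.Ioo x y) (Set.Ici y) := by
    rw [Set.disjoint_left]
    rintro z hz hz'
    exact absurd hz.2 (not_lt.mpr hz')
  have hadd : gaussianReal 0 1 (Set.Ioo x y) + gaussianReal 0 1 (Set.Ici y)
      ≤ gaussianReal 0 1 (Set.Ici x) := by
    rw [← measure_union hdisj measurableSet_Ici]
    exact measure_mono hsub
  have hlt : gaussianReal 0 1 (Set.Ici y) < gaussianReal 0 1 (Set.Ici x) := by
    calc gaussianReal 0 1 (Set.Ici y)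
        < gaussianReal 0 1 (Set.Ioo x y) + gaussianReal 0 1 (Set.Ici y) := by
          exact ENNReal.lt_add_right (measure_ne_top _ _) (ne_of_gt hIoo) |>.trans_le le_rfl
          |>.trans_eq (add_comm _ _)
      _ ≤ gaussianReal 0 1 (Set.Ici x) := hadd
  exact ENNReal.toReal_strict_mono (measure_ne_top _ _) hlt

theorem stmt_14 :
    ∃ ε₀ > (0 : ℝ), ∀ ε ∈ Set.Ioo (0 : ℝ) ε₀,
      ¬ ConcaveOn ℝ Set.univ (fun t : ℝ =>
        Real.log ((ProbabilityTheory.gaussianReal 0 1 (Set.Ici (-(ε * Real.exp t)))).toReal)) := by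
  refine ⟨1, one_pos, fun ε hε hconc => ?_⟩
  obtain ⟨hε0, -⟩ := hε
  set f : ℝ → ℝ := fun t =>
    Real.log ((gaussianReal 0 1 (Set.Ici (-(ε * Real.exp t)))).toReal) with hf
  set m : ℝ := Real.log ((gaussianReal 0 1 (Set.Ici (0 : ℝ))).toReal) with hm
  -- lower bound
  have hlb : ∀ t : ℝ, m ≤ f t := by
    intro t
    have h1 : -(ε * Real.exp t) ≤ 0 := neg_nonpos.mpr (by positivity)
    exact Real.log_le_log (aux_meas_pos 0) (aux_mono h1)
  -- strict increase from 0 to 1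
  have hinc : f 0 < f 1 := by
    have h1 : -(ε * Real.exp 1) < -(ε * Real.exp 0) := by
      have := Real.exp_lt_exp.mpr (zero_lt_one)
      nlinarith
    exact Real.log_lt_log (aux_meas_pos _) (aux_strict h1)
  have hspos : (0:ℝ) < f 1 - f 0 := sub_pos.mpr hinc
  obtain ⟨t, htneg, hsmall⟩ : ∃ t : ℝ, t < 0 ∧ f 0 + t * (f 1 - f 0) < m := by
    refine ⟨(m - f 0) / (f 1 - f 0) - 1, ?_, ?_⟩
    · have h0 : m - f 0 ≤ 0 := sub_nonpos.mpr (hlb 0)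
      have h2 : (m - f 0) / (f 1 - f 0) ≤ 0 :=
        div_nonpos_iff.mpr (Or.inr ⟨h0, hspos.le⟩)
      linarith
    · have h3 : ((m - f 0) / (f 1 - f 0) - 1) * (f 1 - f 0)
          = m - f 0 - (f 1 - f 0) := by
        field_simp
      rw [h3]
      linarith
  have h1t : (0:ℝ) < 1 - t := by linarith
  have ha : (0:ℝ) ≤ 1/(1-t) := by positivity
  have hb : (0:ℝ) ≤ -t/(1-t) := div_nonneg (by linarith) h1t.le
  have hab : 1/(1-t) + -t/(1-t) = 1 := by field_simp; ring
  have key := hconc.2 (Set.mem_univ t) (Set.mem_univ (1:ℝ)) ha hb hab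
  have hcomb : (1/(1-t)) • t + (-t/(1-t)) • (1:ℝ) = 0 := by
    simp only [smul_eq_mul, mul_one]
    field_simp
    ring
  rw [hcomb] at key
  simp only [smul_eq_mul] at key
  have hft : f t ≤ f 0 + t * (f 1 - f 0) := by
    have h2 := mul_le_mul_of_nonneg_left key h1t.le
    have e1 : (1-t) * (1/(1-t) * f t + -t/(1-t) * f 1) = f t - t * f 1 := by
      field_simp
      ring
    rw [e1] at h2
    nlinarith
  linarith [hlb t]
end
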